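/- If U ≤_RK W (U is the Rudin–Keisler projection of W via some f) then ch(U) ≤ ch(W): the minimum cardinality of a ⊆*-base for U is at most that for W; moreover 𝔱(W) ≤ 𝔱(U). -/

import Mathlib

open Cardinal

namespace PaperFormal

universe u

/-- `A ⊆* B` modulo sets of size `< κ`. -/
def AlmostSubC {Z : Type u} (κ : Cardinal.{u}) (A B : Set Z) : Prop :=
  #(A \ B : Set Z) < κ

/-- `ℬ` is a `⊆*`-base for the ultrafilter `U`. -/
def IsBaseC {Z : Type u} (κ : Cardinal.{u}) (U : Ultrafilter Z) (ℬ : Set (Set Z)) : Prop :=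
  (∀ B ∈ ℬ, B ∈ U) ∧ ∀ A ∈ U, ∃ B ∈ ℬ, AlmostSubC κ B A

/-- the character `ch(U)`: least size of a `⊆*`-base. -/
noncomputable def chC {Z : Type u} (κ : Cardinal.{u}) (U : Ultrafilter Z) : Cardinal.{u} :=
  sInf { μ : Cardinal.{u} | ∃ ℬ, IsBaseC κ U ℬ ∧ #ℬ = μ }

/-- the depth `𝔱(U)`: least regular `λ` such that there is a `⊆*`-decreasing
`λ`-sequence in `U` with no `⊆*`-lower bound in `U`. -/
noncomputable def tC {Z : Type u} (κ : Cardinal.{u}) (U : Ultrafilter Z) : Cardinal.{u} :=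
  sInf { μ : Cardinal.{u} | μ.IsRegular ∧ ∃ S : Ordinal.{u} → Set Z,
    (∀ i < μ.ord, S i ∈ U) ∧
    (∀ i j, i < j → j < μ.ord → AlmostSubC κ (S j) (S i)) ∧
    ¬ ∃ A ∈ U, ∀ i < μ.ord, AlmostSubC κ A (S i) }

/-! ### Auxiliary lemmas -/

section Aux

variable {Z : Type u}

theorem as_refl {κ : Cardinal.{u}} (hκ : 0 < κ) (A : Set Z) : AlmostSubC κ A A := by
  unfold AlmostSubC
  rw [Set.diff_self]
  simpa using hκ

theorem as_mono {κ : Cardinal.{u}} {A' A B B' : Set Z} (h1 : A' ⊆ A) (h2 : B ⊆ B')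
    (h : AlmostSubC κ A B) : AlmostSubC κ A' B' :=
  lt_of_le_of_lt (mk_le_mk_of_subset (Set.diff_subset_diff h1 h2)) h

theorem as_trans {κ : Cardinal.{u}} (hκ : ℵ₀ ≤ κ) {A B C : Set Z}
    (h1 : AlmostSubC κ A B) (h2 : AlmostSubC κ B C) : AlmostSubC κ A C := by
  have hsub : (A \ C : Set Z) ⊆ (A \ B) ∪ (B \ C) := by
    intro z hz
    by_cases h : z ∈ B
    · exact Or.inr ⟨h, hz.2⟩
    · exact Or.inl ⟨hz.1, h⟩
  exact lt_of_le_of_lt ((mk_le_mk_of_subset hsub).trans (mk_union_le _ _))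
    (add_lt_of_lt hκ h1 h2)

/-- The defining set of `tC`. -/
def tSet (κ : Cardinal.{u}) (U : Ultrafilter Z) : Set Cardinal.{u} :=
  { μ : Cardinal.{u} | μ.IsRegular ∧ ∃ S : Ordinal.{u} → Set Z,
    (∀ i < μ.ord, S i ∈ U) ∧
    (∀ i j, i < j → j < μ.ord → AlmostSubC κ (S j) (S i)) ∧
    ¬ ∃ A ∈ U, ∀ i < μ.ord, AlmostSubC κ A (S i) }

theorem tC_eq (κ : Cardinal.{u}) (U : Ultrafilter Z) : tC κ U = sInf (tSet κ U) := rfl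

/-- every member of a uniform ultrafilter can be shrunk by a set of full size. -/
theorem exists_shrink {κ : Cardinal.{u}} (hκ : ℵ₀ ≤ κ) (V : Ultrafilter Z)
    (huni : ∀ A ∈ V, #(A : Set Z) = κ) {A : Set Z} (hA : A ∈ V) :
    ∃ A', A' ∈ V ∧ A' ⊆ A ∧ #(A \ A' : Set Z) = κ := by
  have hAcard : #(A : Set Z) = κ := huni A hA
  have hsum : #(↥A ⊕ ↥A) = #↥A := by
    simp [hAcard, add_eq_self hκ]
  obtain ⟨e⟩ := Cardinal.eq.1 hsum
  set A1 : Set Z := Subtype.val '' (Set.range fun x : ↥A => e (Sum.inl x)) with hA1def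
  set A2 : Set Z := Subtype.val '' (Set.range fun x : ↥A => e (Sum.inr x)) with hA2def
  have hA1sub : A1 ⊆ A := by rintro z ⟨w, _, rfl⟩; exact w.2
  have hA2sub : A2 ⊆ A := by rintro z ⟨w, _, rfl⟩; exact w.2
  have hcard1 : #(A1 : Set Z) = κ := by
    rw [hA1def, mk_image_eq Subtype.val_injective,
      mk_range_eq _ (fun x y hxy => Sum.inl_injective (e.injective hxy)), hAcard]
  have hcard2 : #(A2 : Set Z) = κ := by
    rw [hA2def, mk_image_eq Subtype.val_injective,
      mk_range_eq _ (fun x y hxy => Sum.inr_injective (e.injective hxy)), hAcard]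
  have hdisj : ∀ z, z ∈ A1 → z ∈ A2 → False := by
    rintro z ⟨w1, hw1, rfl⟩ ⟨w2, hw2, hz⟩
    obtain ⟨x1, rfl⟩ := hw1
    obtain ⟨x2, rfl⟩ := hw2
    have : e (Sum.inr x2) = e (Sum.inl x1) := Subtype.ext hz
    simpa using e.injective this
  have hdiff : A \ A1 = A2 := by
    apply Set.eq_of_subset_of_subset
    · rintro z ⟨hzA, hz1⟩
      rcases h : e.symm ⟨z, hzA⟩ with x | x
      · exfalso
        apply hz1
        refine ⟨⟨z, hzA⟩, ⟨x, ?_⟩, rfl⟩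
        show e (Sum.inl x) = ⟨z, hzA⟩
        rw [← h, Equiv.apply_symm_apply]
      · refine ⟨⟨z, hzA⟩, ⟨x, ?_⟩, rfl⟩
        show e (Sum.inr x) = ⟨z, hzA⟩
        rw [← h, Equiv.apply_symm_apply]
    · intro z hz
      exact ⟨hA2sub hz, fun hz1 => hdisj z hz1 hz⟩
  rcases V.mem_or_compl_mem A1 with h1 | h1
  · exact ⟨A1, h1, hA1sub, by rw [hdiff, hcard2]⟩
  · refine ⟨A \ A1, ?_, Set.diff_subset, ?_⟩
    · rw [Set.diff_eq]
      exact Filter.inter_mem hA h1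
    · rw [Set.diff_diff_cancel_left hA1sub, hcard1]

/-- choice of a full-size shrink. -/
noncomputable def shrink (κ : Cardinal.{u}) (V : Ultrafilter Z) (A : Set Z) : Set Z :=
  @dite _ (∃ A', A' ∈ V ∧ A' ⊆ A ∧ #(A \ A' : Set Z) = κ) (Classical.dec _)
    (fun h => h.choose) (fun _ => ∅)

theorem shrink_spec {κ : Cardinal.{u}} {V : Ultrafilter Z} {A : Set Z}
    (h : ∃ A', A' ∈ V ∧ A' ⊆ A ∧ #(A \ A' : Set Z) = κ) :
    shrink κ V A ∈ V ∧ shrink κ V A ⊆ A ∧ #(A \ shrink κ V A : Set Z) = κ := by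
  unfold shrink
  rw [dif_pos h]
  exact h.choose_spec

/-- a transfinite recursively constructed strictly `⊆*`-decreasing sequence in `V`. -/
noncomputable def towerSeq (κ : Cardinal.{u}) (V : Ultrafilter Z) : Ordinal.{u} → Set Z :=
  Ordinal.lt_wf.fix fun i rec =>
    @dite _ (∃ A, A ∈ V ∧ ∀ j, ∀ hj : j < i, AlmostSubC κ A (rec j hj)) (Classical.dec _)
      (fun h => shrink κ V h.choose) (fun _ => ∅)

/-- the `i`-th stage of the tower construction admits a lower bound. -/
def GoodAt (κ : Cardinal.{u}) (V : Ultrafilter Z) (i : Ordinal.{u}) : Prop :=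
  ∃ A, A ∈ V ∧ ∀ j, ∀ _ : j < i, AlmostSubC κ A (towerSeq κ V j)

theorem towerSeq_def (κ : Cardinal.{u}) (V : Ultrafilter Z) (i : Ordinal.{u}) :
    towerSeq κ V i = @dite _ (GoodAt κ V i) (Classical.dec _)
      (fun h => shrink κ V h.choose) (fun _ => ∅) :=
  WellFounded.fix_eq _ _ _

theorem tower_spec {κ : Cardinal.{u}} (hκ : ℵ₀ ≤ κ) (V : Ultrafilter Z)
    (huni : ∀ A ∈ V, #(A : Set Z) = κ) {i : Ordinal.{u}} (h : GoodAt κ V i) :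
    towerSeq κ V i ∈ V ∧ (∀ j, j < i → AlmostSubC κ (towerSeq κ V i) (towerSeq κ V j)) ∧
      (∀ j, j < i → ¬ AlmostSubC κ (towerSeq κ V j) (towerSeq κ V i)) := by
  obtain ⟨hAV, hAbd⟩ := h.choose_spec
  have hs := shrink_spec (exists_shrink hκ V huni hAV)
  have heq : towerSeq κ V i = shrink κ V h.choose := by
    rw [towerSeq_def, dif_pos h]
  rw [heq]
  refine ⟨hs.1, fun j hj => as_mono hs.2.1 (subset_refl _) (hAbd j hj), fun j hj hcon => ?_⟩
  have hsub : (h.choose \ shrink κ V h.choose : Set Z) ⊆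
      (h.choose \ towerSeq κ V j) ∪ (towerSeq κ V j \ shrink κ V h.choose) := by
    intro z hz
    by_cases hzj : z ∈ towerSeq κ V j
    · exact Or.inr ⟨hzj, hz.2⟩
    · exact Or.inl ⟨hz.1, hzj⟩
  have : κ < κ := by
    calc κ = #(h.choose \ shrink κ V h.choose : Set Z) := hs.2.2.symm
      _ ≤ #((h.choose \ towerSeq κ V j) ∪ (towerSeq κ V j \ shrink κ V h.choose) : Set Z) :=
          mk_le_mk_of_subset hsub
      _ ≤ #(h.choose \ towerSeq κ V j : Set Z) + #(towerSeq κ V j \ shrink κ V h.choose : Set Z) :=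
          mk_union_le _ _
      _ < κ := add_lt_of_lt hκ (hAbd j hj) hcon
  exact absurd this (lt_irrefl κ)

theorem goodAt_zero {κ : Cardinal.{u}} (V : Ultrafilter Z) : GoodAt κ V 0 :=
  ⟨Set.univ, Filter.univ_mem, fun j hj => absurd hj (not_lt_zero : ¬ j < 0)⟩

/-- the defining set of `tC` is nonempty for uniform ultrafilters on infinite sets. -/
theorem tSet_nonempty {κ : Cardinal.{u}} (hκ : ℵ₀ ≤ κ) (V : Ultrafilter Z)
    (huni : ∀ A ∈ V, #(A : Set Z) = κ) : (tSet κ V).Nonempty := by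
  have hκ0 : (0 : Cardinal.{u}) < κ := aleph0_pos.trans_le hκ
  -- Step 1: some stage is not good.
  have hbadex : ∃ i, ¬ GoodAt κ V i := by
    by_contra hcon
    push_neg at hcon
    have hinj : ∀ i j : Ordinal.{u}, i < j → towerSeq κ V i ≠ towerSeq κ V j := by
      intro i j hij heq
      have hspec := tower_spec hκ V huni (hcon j)
      apply hspec.2.2 i hij
      rw [heq]
      exact as_refl hκ0 _
    apply Cardinal.not_injective_limitation_set (towerSeq κ V)
    intro i _ j _ hij
    rcases lt_trichotomy i j with h | h | h
    · exact absurd hij (hinj i j h)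
    · exact h
    · exact absurd hij.symm (hinj j i h)
  -- Step 2: take the least bad stage.
  set Bad : Set Ordinal.{u} := {i | ¬ GoodAt κ V i} with hBaddef
  have hBadne : Bad.Nonempty := hbadex
  set i0 : Ordinal.{u} := Ordinal.lt_wf.min Bad hBadne with hi0def
  have hi0bad : ¬ GoodAt κ V i0 := Ordinal.lt_wf.min_mem Bad hBadne
  have hi0min : ∀ j, j < i0 → GoodAt κ V j := by
    intro j hj
    by_contra hjbad
    exact Ordinal.lt_wf.not_lt_min Bad hjbad hj
  -- Step 3: `i0` is a limit ordinal.
  have hlim : Order.IsSuccLimit i0 := by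
    rcases Ordinal.zero_or_succ_or_isSuccLimit i0 with h0 | ⟨k, hk⟩ | hl
    · exact absurd (h0 ▸ goodAt_zero V) hi0bad
    · exfalso
      have hki : k < i0 := hk ▸ Order.lt_succ k
      have hspec := tower_spec hκ V huni (hi0min k hki)
      apply hi0bad
      refine ⟨towerSeq κ V k, hspec.1, fun j hj => ?_⟩
      rw [← hk] at hj
      rcases (Order.lt_succ_iff.1 hj).lt_or_eq with h | h
      · exact hspec.2.1 j h
      · rw [h]; exact as_refl hκ0 _
    · exact hl
  -- Step 4: reindex along a fundamental sequence.
  obtain ⟨g, hg⟩ := Ordinal.exists_fundamental_sequence i0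
  refine ⟨i0.cof, Cardinal.isRegular_cof hlim,
    fun α => if hα : α < i0.cof.ord then towerSeq κ V (g α hα) else ∅, ?_, ?_, ?_⟩
  · intro α hα
    simp only [dif_pos hα]
    exact (tower_spec hκ V huni (hi0min _ (hg.lt hα))).1
  · intro α β hαβ hβ
    have hα : α < i0.cof.ord := hαβ.trans hβ
    simp only [dif_pos hα, dif_pos hβ]
    exact (tower_spec hκ V huni (hi0min _ (hg.lt hβ))).2.1 _ (hg.strict_mono hα hβ hαβ)
  · rintro ⟨A, hAV, hbd⟩
    apply hi0bad
    refine ⟨A, hAV, fun j hj => ?_⟩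
    have hj' : j < Ordinal.blsub.{u, u} i0.cof.ord g := by rw [hg.blsub_eq]; exact hj
    obtain ⟨α, hα, hle⟩ := Ordinal.lt_blsub_iff.1 hj'
    have h1 : AlmostSubC κ A (towerSeq κ V (g α hα)) := by
      have := hbd α hα
      simpa only [dif_pos hα] using this
    rcases hle.lt_or_eq with h | h
    · exact as_trans hκ h1 ((tower_spec hκ V huni (hi0min _ (hg.lt hα))).2.1 j h)
    · rw [h]; exact h1

/-- lower-bound transfer along a fundamental sequence at limit stages. -/
theorem bound_of_cof {κ : Cardinal.{u}} (hκ : ℵ₀ ≤ κ) (V : Ultrafilter Z)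
    {T : Ordinal.{u} → Set Z} {i : Ordinal.{u}}
    (hlim : Order.IsSuccLimit i) (hmem : ∀ j, j < i → T j ∈ V)
    (hdec : ∀ j k, j < k → k < i → AlmostSubC κ (T k) (T j))
    (hnot : i.cof ∉ tSet κ V) :
    ∃ A, A ∈ V ∧ ∀ j, j < i → AlmostSubC κ A (T j) := by
  obtain ⟨g, hg⟩ := Ordinal.exists_fundamental_sequence i
  set S' : Ordinal.{u} → Set Z :=
    fun α => if hα : α < i.cof.ord then T (g α hα) else ∅ with hS'def
  by_cases hb : ∃ A ∈ V, ∀ α < i.cof.ord, AlmostSubC κ A (S' α)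
  · obtain ⟨A, hAV, hbd⟩ := hb
    refine ⟨A, hAV, fun j hj => ?_⟩
    have hj' : j < Ordinal.blsub.{u, u} i.cof.ord g := by rw [hg.blsub_eq]; exact hj
    obtain ⟨α, hα, hle⟩ := Ordinal.lt_blsub_iff.1 hj'
    have h1 : AlmostSubC κ A (T (g α hα)) := by
      have := hbd α hα
      simpa only [hS'def, dif_pos hα] using this
    rcases hle.lt_or_eq with h | h
    · exact as_trans hκ h1 (hdec j _ h (hg.lt hα))
    · rw [h]; exact h1
  · exfalso
    apply hnot
    refine ⟨Cardinal.isRegular_cof hlim, S', ?_, ?_, hb⟩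
    · intro α hα
      simp only [hS'def, dif_pos hα]
      exact hmem _ (hg.lt hα)
    · intro α β hαβ hβ
      have hα : α < i.cof.ord := hαβ.trans hβ
      simp only [hS'def, dif_pos hα, dif_pos hβ]
      exact hdec _ _ (hg.strict_mono hα hβ hαβ) (hg.lt hβ)

/-- the pulled-back, recursively corrected sequence in `W`. -/
noncomputable def pullSeq {X Y : Type u} (κ : Cardinal.{u}) (W : Ultrafilter Y) (f : Y → X)
    (S : Ordinal.{u} → Set X) : Ordinal.{u} → Set Y :=
  Ordinal.lt_wf.fix fun i rec =>
    (@dite _ (∃ A, A ∈ W ∧ ∀ j, ∀ hj : j < i, AlmostSubC κ A (rec j hj)) (Classical.dec _)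
      (fun h => h.choose) (fun _ => Set.univ)) ∩ f ⁻¹' (S i)

def PullGood {X Y : Type u} (κ : Cardinal.{u}) (W : Ultrafilter Y) (f : Y → X)
    (S : Ordinal.{u} → Set X) (i : Ordinal.{u}) : Prop :=
  ∃ A, A ∈ W ∧ ∀ j, ∀ _ : j < i, AlmostSubC κ A (pullSeq κ W f S j)

theorem pullSeq_def {X Y : Type u} (κ : Cardinal.{u}) (W : Ultrafilter Y) (f : Y → X)
    (S : Ordinal.{u} → Set X) (i : Ordinal.{u}) :
    pullSeq κ W f S i = (@dite _ (PullGood κ W f S i) (Classical.dec _)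
      (fun h => h.choose) (fun _ => Set.univ)) ∩ f ⁻¹' (S i) :=
  WellFounded.fix_eq _ _ _

/-- main lemma for the depth inequality. -/
theorem t_le {X Y : Type u} {κ : Cardinal.{u}} (hκ : ℵ₀ ≤ κ)
    (U : Ultrafilter X) (W : Ultrafilter Y) (f : Y → X) (hf : U = W.map f)
    {μ : Cardinal.{u}} (hμ : μ ∈ tSet κ U) : sInf (tSet κ W) ≤ μ := by
  by_contra hcon
  push_neg at hcon
  obtain ⟨hreg, S, hSmem, hSdec, hSnb⟩ := hμ
  set T : Ordinal.{u} → Set Y := pullSeq κ W f S with hTdef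
  have hTsub : ∀ i, T i ⊆ f ⁻¹' (S i) := by
    intro i
    rw [hTdef, pullSeq_def]
    exact Set.inter_subset_right
  have hTmem : ∀ i, i < μ.ord → T i ∈ W := by
    intro i hi
    rw [hTdef, pullSeq_def]
    apply Filter.inter_mem
    · by_cases h : PullGood κ W f S i
      · rw [dif_pos h]; exact h.choose_spec.1
      · rw [dif_neg h]; exact Filter.univ_mem
    · have hSi : S i ∈ U := hSmem i hi
      rw [hf] at hSi
      exact Ultrafilter.mem_map.1 hSi
  have key : ∀ i, i < μ.ord → ∀ j, j < i → AlmostSubC κ (T i) (T j) := by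
    intro i
    induction i using Ordinal.induction with
    | h i IH =>
      intro hi
      have hbound : PullGood κ W f S i := by
        rcases Ordinal.zero_or_succ_or_isSuccLimit i with h0 | ⟨k, hk⟩ | hlim
        · exact ⟨Set.univ, Filter.univ_mem,
            fun j hj => absurd hj (by rw [h0] at *; exact (not_lt_zero : ¬ j < 0))⟩
        · have hki : k < i := hk ▸ Order.lt_succ k
          refine ⟨T k, hTmem k (hki.trans hi), fun j hj => ?_⟩
          rw [← hk] at hj
          rcases (Order.lt_succ_iff.1 hj).lt_or_eq with h | h
          · exact IH k hki (hki.trans hi) j h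
          · rw [h]; exact as_refl (aleph0_pos.trans_le hκ) _
        · have hcof : i.cof ∉ tSet κ W := by
            intro hmem'
            have h1 : (i.cof : Cardinal.{u}) ≤ i.card := Ordinal.cof_le_card i
            have h2 : i.card < μ := Cardinal.lt_ord.1 hi
            exact absurd (csInf_le' hmem') (not_le.2 ((h1.trans_lt h2).trans hcon))
          exact bound_of_cof hκ W hlim (fun j hj => hTmem j (hj.trans hi))
            (fun j k hjk hki => IH k hki (hki.trans hi) j hjk) hcof
      intro j hj
      have hsub : T i ⊆ hbound.choose := by
        rw [hTdef, pullSeq_def, dif_pos hbound]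
        exact Set.inter_subset_left
      exact as_mono hsub (subset_refl _) (hbound.choose_spec.2 j hj)
  have hμnot : μ ∉ tSet κ W := fun hmem' => absurd (csInf_le' hmem') (not_le.2 hcon)
  have hbd : ∃ A ∈ W, ∀ i < μ.ord, AlmostSubC κ A (T i) := by
    by_contra hnb
    exact hμnot ⟨hreg, T, fun i hi => hTmem i hi, fun i j hij hj => key j hj i hij, hnb⟩
  obtain ⟨B, hBW, hBbd⟩ := hbd
  apply hSnb
  refine ⟨f '' B, ?_, fun i hi => ?_⟩
  · rw [hf]
    exact Ultrafilter.mem_map.2 (Filter.mem_of_superset hBW (Set.subset_preimage_image f B))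
  · have hsub : f '' B \ S i ⊆ f '' (B \ T i) := by
      rintro x ⟨⟨y, hyB, rfl⟩, hxS⟩
      exact ⟨y, ⟨hyB, fun hyT => hxS (hTsub i hyT)⟩, rfl⟩
    exact lt_of_le_of_lt ((mk_le_mk_of_subset hsub).trans (mk_image_le)) (hBbd i hi)

end Aux

/-- if `U, W` are uniform ultrafilters on sets `X, Y` of the same
infinite cardinality `κ` and `U ≤_RK W` (via `f`), then `ch(U) ≤ ch(W)` and
`𝔱(W) ≤ 𝔱(U)`. -/
theorem stmt16 {X Y : Type u} (κ : Cardinal.{u}) (hκ : Cardinal.aleph0 ≤ κ)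
    (hX : #X = κ) (hY : #Y = κ)
    (U : Ultrafilter X) (W : Ultrafilter Y)
    (hUuni : ∀ A ∈ U, #(A : Set X) = κ) (hWuni : ∀ A ∈ W, #(A : Set Y) = κ)
    (f : Y → X) (hf : U = W.map f) :
    chC κ U ≤ chC κ W ∧ tC κ W ≤ tC κ U := by
  have hκ0 : (0 : Cardinal.{u}) < κ := aleph0_pos.trans_le hκ
  constructor
  · -- characters
    have hSWne : { μ : Cardinal.{u} | ∃ ℬ, IsBaseC κ W ℬ ∧ #ℬ = μ }.Nonempty := by
      refine ⟨#({A : Set Y | A ∈ W}), {A : Set Y | A ∈ W}, ⟨fun B hB => hB, fun A hA => ?_⟩, rfl⟩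
      exact ⟨A, hA, as_refl hκ0 A⟩
    obtain ⟨ℬ, hbase, hcard⟩ := csInf_mem hSWne
    have hbase' : IsBaseC κ U ((fun B => f '' B) '' ℬ) := by
      constructor
      · rintro B ⟨B', hB', rfl⟩
        rw [hf]
        exact Ultrafilter.mem_map.2
          (Filter.mem_of_superset (hbase.1 B' hB') (Set.subset_preimage_image f B'))
      · intro A hA
        have hA' : f ⁻¹' A ∈ W := by rw [hf] at hA; exact Ultrafilter.mem_map.1 hA
        obtain ⟨B, hB, hBA⟩ := hbase.2 _ hA'
        refine ⟨f '' B, ⟨B, hB, rfl⟩, ?_⟩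
        have hsub : f '' B \ A ⊆ f '' (B \ f ⁻¹' A) := by
          rintro x ⟨⟨y, hyB, rfl⟩, hxA⟩
          exact ⟨y, ⟨hyB, hxA⟩, rfl⟩
        exact lt_of_le_of_lt ((mk_le_mk_of_subset hsub).trans (mk_image_le)) hBA
    calc chC κ U ≤ #((fun B => f '' B) '' ℬ) := csInf_le' ⟨_, hbase', rfl⟩
      _ ≤ #ℬ := mk_image_le
      _ = chC κ W := hcard
  · -- depths
    rcases (tSet κ W).eq_empty_or_nonempty with he | _
    · rw [tC_eq κ W, he, Cardinal.sInf_empty]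
      exact bot_le
    · have hU := tSet_nonempty hκ U hUuni
      have := t_le hκ U W f hf (csInf_mem hU)
      rw [tC_eq κ W, tC_eq κ U]
      exact this

end PaperFormal
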